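/- Let E be a Banach space which contains a proper closed subspace F that is isomorphic to E (as a topological vector space), complemented in E, and of infinite codimension in E (i.e., E/F is infinite-dimensional). Then multiplication in the Calkin algebra 𝓠(E) = 𝓑(E)/𝓚(E) is not open. -/

import Mathlib

open Pointwise

set_option maxHeartbeats 1000000

/-- If a Banach space `E` contains a proper closed complemented subspace `F` of infinite
codimension that is isomorphic to `E`, then multiplication in the Calkin algebra
`𝓠(E) = 𝓑(E)/𝓚(E)` is not open.  The Calkin algebra is modelled as a Banach algebra `Q`
together with a surjective ring homomorphism `π : 𝓑(E) →+* Q` whose kernel is exactly the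
ideal of compact operators and which satisfies the quotient-norm identity
`π '' B(T, r) = B(π T, r)`. -/
theorem calkin_multiplication_not_open
    {𝕜 : Type*} [RCLike 𝕜] {E : Type*} [NormedAddCommGroup E] [NormedSpace 𝕜 E]
    [CompleteSpace E] {Q : Type*} [NormedRing Q] [NormedAlgebra 𝕜 Q] [CompleteSpace Q]
    (F : Submodule 𝕜 E) (hclosed : IsClosed (F : Set E))
    (hproper : F ≠ ⊤) (hcompl : Submodule.ClosedComplemented F)
    (hiso : Nonempty (F ≃L[𝕜] E)) (hcodim : ¬ FiniteDimensional 𝕜 (E ⧸ F))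
    (π : (E →L[𝕜] E) →+* Q) (hsurj : Function.Surjective π)
    (hker : ∀ T : E →L[𝕜] E, π T = 0 ↔ IsCompactOperator T)
    (hquot : ∀ (T : E →L[𝕜] E) (r : ℝ), π '' Metric.ball T r = Metric.ball (π T) r) :
    ¬ ∀ a b : Q, ∀ ε > 0, ∃ δ > 0,
        Metric.ball (a * b) δ ⊆ Metric.ball a ε * Metric.ball b ε := by
  intro H
  haveI : IsClosed (F : Set E) := hclosed
  obtain ⟨J⟩ := hiso
  obtain ⟨P, hP⟩ := hcompl
  -- the basic operators
  set U : E →L[𝕜] E := F.subtypeL.comp (J.symm : E →L[𝕜] F) with hU_def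
  set V : E →L[𝕜] E := (J : F →L[𝕜] E).comp P with hV_def
  have hUx : ∀ x : E, U x = ((J.symm x : F) : E) := fun x => rfl
  have hUmem : ∀ x : E, U x ∈ F := fun x => (J.symm x).2
  have hVU : V * U = 1 := by
    ext x
    have h1 : P ((J.symm x : F) : E) = J.symm x := hP (J.symm x)
    show (J (P (((J.symm x : F) : E))) : E) = x
    rw [h1, J.apply_symm_apply]
  -- lower bound for U
  set Cj : ℝ := ‖(J : F →L[𝕜] E)‖ + 1 with hCj_def
  have hCj1 : 1 ≤ Cj := by
    have : (0:ℝ) ≤ ‖(J : F →L[𝕜] E)‖ := ContinuousLinearMap.opNorm_nonneg _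
    rw [hCj_def]; linarith
  have hCj0 : 0 < Cj := lt_of_lt_of_le one_pos hCj1
  have hUlow : ∀ x : E, ‖x‖ ≤ Cj * ‖U x‖ := by
    intro x
    have h0 : ‖x‖ = ‖(J : F →L[𝕜] E) (J.symm x)‖ := by
      rw [ContinuousLinearEquiv.coe_coe, J.apply_symm_apply]
    have h1 : ‖(J : F →L[𝕜] E) (J.symm x)‖ ≤ ‖(J : F →L[𝕜] E)‖ * ‖J.symm x‖ :=
      (J : F →L[𝕜] E).le_opNorm _
    have h2 : ‖J.symm x‖ = ‖U x‖ := by rw [hUx x, Submodule.norm_coe]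
    have h3 : ‖(J : F →L[𝕜] E)‖ * ‖U x‖ ≤ Cj * ‖U x‖ :=
      mul_le_mul_of_nonneg_right (by simp [hCj_def]) (norm_nonneg _)
    rw [h0]
    calc ‖(J : F →L[𝕜] E) (J.symm x)‖ ≤ ‖(J : F →L[𝕜] E)‖ * ‖J.symm x‖ := h1
      _ = ‖(J : F →L[𝕜] E)‖ * ‖U x‖ := by rw [h2]
      _ ≤ Cj * ‖U x‖ := h3
  set ε : ℝ := 1 / (32 * Cj) with hε_def
  have hε : 0 < ε := by positivity
  obtain ⟨δ, hδ0, hδ⟩ := H (π U) (π V) ε hε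
  obtain ⟨p, hp_def⟩ : ∃ p : Q, p = π U * π V := ⟨_, rfl⟩
  rw [← hp_def] at hδ
  have hpmul : p = π (U * V) := by rw [hp_def, map_mul]
  have hpp : p * p = p := by
    have hUVUV : (U * V) * (U * V) = U * V := by
      rw [mul_assoc U V (U * V), ← mul_assoc V U V, hVU, one_mul]
    rw [hpmul, ← map_mul, hUVUV]
  obtain ⟨q, hq_def⟩ : ∃ q : Q, q = 1 - p := ⟨_, rfl⟩
  have hpq : p * q = 0 := by rw [hq_def, mul_sub, mul_one, hpp, sub_self]
  have hqp : q * p = 0 := by rw [hq_def, sub_mul, one_mul, hpp, sub_self]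
  have hqq : q * q = q := by nth_rewrite 2 [hq_def]; rw [mul_sub, mul_one, hqp, sub_zero]
  have hpq1 : p + q = 1 := by rw [hq_def]; abel
  -- the invertible element c close to p
  obtain ⟨t, ht_def⟩ : ∃ t : ℝ, t = δ / (2 * (‖q‖ + 1)) := ⟨_, rfl⟩
  have hq1 : 0 < ‖q‖ + 1 := by positivity
  have ht0 : 0 < t := by rw [ht_def]; positivity
  obtain ⟨τ, hτ_def⟩ : ∃ τ : 𝕜, τ = (t : 𝕜) := ⟨_, rfl⟩
  have hτ : τ ≠ 0 := by
    rw [hτ_def]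
    simpa using ht0.ne'
  obtain ⟨c, hc_def⟩ : ∃ c : Q, c = p + τ • q := ⟨_, rfl⟩
  obtain ⟨c', hc'_def⟩ : ∃ c' : Q, c' = p + τ⁻¹ • q := ⟨_, rfl⟩
  have h1 : p * (τ⁻¹ • q) = 0 := by rw [mul_smul_comm, hpq, smul_zero]
  have h1' : p * (τ • q) = 0 := by rw [mul_smul_comm, hpq, smul_zero]
  have h2 : (τ • q) * p = 0 := by rw [smul_mul_assoc, hqp, smul_zero]
  have h2' : (τ⁻¹ • q) * p = 0 := by rw [smul_mul_assoc, hqp, smul_zero]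
  have h3 : (τ • q) * (τ⁻¹ • q) = q := by
    rw [smul_mul_assoc, mul_smul_comm, smul_smul, mul_inv_cancel₀ hτ, one_smul, hqq]
  have h3' : (τ⁻¹ • q) * (τ • q) = q := by
    rw [smul_mul_assoc, mul_smul_comm, smul_smul, inv_mul_cancel₀ hτ, one_smul, hqq]
  have hcc' : c * c' = 1 := by
    rw [hc_def, hc'_def, mul_add, add_mul, add_mul, hpp, h1, h2, h3, add_zero, zero_add, hpq1]
  have hc'c : c' * c = 1 := by
    rw [hc_def, hc'_def, mul_add, add_mul, add_mul, hpp, h1', h2', h3', add_zero, zero_add, hpq1]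
  have hcball : c ∈ Metric.ball p δ := by
    rw [Metric.mem_ball, dist_eq_norm]
    have hsub : c - p = τ • q := by rw [hc_def]; abel
    rw [hsub, norm_smul]
    have hnτ : ‖τ‖ = t := by rw [hτ_def, RCLike.norm_ofReal, abs_of_pos ht0]
    rw [hnτ]
    have h3'' : t * (‖q‖ + 1) = δ / 2 := by
      rw [ht_def]; field_simp
    nlinarith [norm_nonneg q, ht0]
  obtain ⟨a', ha', b', hb', hab⟩ := Set.mem_mul.mp (hδ hcball)
  -- a' has a right inverse
  have hrinv : a' * (b' * c') = 1 := by rw [← mul_assoc, hab, hcc']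
  -- lift a' to an operator T' close to U
  have ha'' : a' ∈ π '' Metric.ball U ε := by rw [hquot]; exact ha'
  obtain ⟨T', hT'ball, hT'⟩ := ha''
  have hTU : ‖T' - U‖ < ε := by
    rw [← dist_eq_norm]; exact Metric.mem_ball.mp hT'ball
  obtain ⟨S, hS⟩ := hsurj (b' * c')
  set K : E →L[𝕜] E := T' * S - 1 with hK_def
  have hKcompact : IsCompactOperator K := by
    rw [← hker]
    rw [hK_def, map_sub, map_mul, map_one, hT', hS, hrinv, sub_self]
  -- a separated bounded sequence modulo F
  have h2norm : (1 : ℝ) < ‖(2 : 𝕜)‖ := by rw [RCLike.norm_two]; norm_num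
  have h3 : ‖(2 : 𝕜)‖ < (3 : ℝ) := by rw [RCLike.norm_two]; norm_num
  obtain ⟨f, hfR, hfsep⟩ :=
    exists_seq_norm_le_one_le_norm_sub' (E := E ⧸ F) h2norm h3 hcodim
  have hlift : ∀ n : ℕ, ∃ x : E, Submodule.Quotient.mk x = f n ∧ ‖x‖ < ‖f n‖ + 1 :=
    fun n => Submodule.Quotient.norm_mk_lt (f n) one_pos
  choose w hw hwn using hlift
  have hwbound : ∀ n, ‖w n‖ ≤ 4 := fun n => le_of_lt (lt_of_lt_of_le (hwn n)
    (by linarith [hfR n]))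
  have hwsep : ∀ m n : ℕ, m ≠ n → ∀ z ∈ F, (1 : ℝ) ≤ ‖w m - w n - z‖ := by
    intro m n hmn z hz
    have h1 : (1 : ℝ) ≤ ‖f m - f n‖ := hfsep hmn
    have h2 : (Submodule.Quotient.mk (w m - w n - z) : E ⧸ F) = f m - f n := by
      rw [Submodule.Quotient.mk_sub, Submodule.Quotient.mk_sub, hw m, hw n,
        (Submodule.Quotient.mk_eq_zero F).mpr hz, sub_zero]
    calc (1 : ℝ) ≤ ‖f m - f n‖ := h1
      _ = ‖(Submodule.Quotient.mk (w m - w n - z) : E ⧸ F)‖ := by rw [h2]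
      _ ≤ ‖w m - w n - z‖ := Submodule.Quotient.norm_mk_le F _
  -- two indices whose K-images are close
  have hKcompact' : IsCompactOperator (K : E →ₗ[𝕜] E) := hKcompact
  have hcs : IsCompact (closure ((K : E →ₗ[𝕜] E) '' Metric.closedBall 0 4)) :=
    hKcompact'.isCompact_closure_image_of_bounded Metric.isBounded_closedBall
  have hmem : ∀ n, K (w n) ∈ closure ((K : E →ₗ[𝕜] E) '' Metric.closedBall 0 4) := by
    intro n
    apply subset_closure
    exact ⟨w n, by simpa [Metric.mem_closedBall, dist_zero_right] using hwbound n, rfl⟩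
  obtain ⟨L, hL, φ, hφ, hconv⟩ := hcs.tendsto_subseq hmem
  rw [Metric.tendsto_atTop] at hconv
  obtain ⟨N, hN⟩ := hconv (1/8) (by norm_num)
  set m : ℕ := φ (N + 1) with hm_def
  set n : ℕ := φ N with hn_def
  have hmn : n < m := hφ (Nat.lt_succ_self N)
  have hKd : ‖K (w m) - K (w n)‖ < 1/4 := by
    have h1 := hN (N + 1) (Nat.le_succ N)
    have h2 := hN N le_rfl
    have h4 : dist (K (w m)) (K (w n)) ≤ dist (K (w m)) L + dist (K (w n)) L :=
      dist_triangle_right _ _ _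
    rw [dist_eq_norm] at h4
    simp only [Function.comp_apply] at h1 h2
    calc ‖K (w m) - K (w n)‖ ≤ dist (K (w m)) L + dist (K (w n)) L := h4
      _ < 1/8 + 1/8 := add_lt_add h1 h2
      _ = 1/4 := by norm_num
  -- the main estimate
  set z : E := w m - w n with hz_def
  have hz8 : ‖z‖ ≤ 8 := by
    calc ‖z‖ ≤ ‖w m‖ + ‖w n‖ := norm_sub_le _ _
      _ ≤ 8 := by linarith [hwbound m, hwbound n]
  have hKz : K z = K (w m) - K (w n) := map_sub K _ _
  have hKznorm : ‖K z‖ < 1/4 := by rw [hKz]; exact hKd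
  set u : E := S z with hu_def
  set y : E := T' u with hy_def
  have hyz : y = z + K z := by
    have : K z = T' (S z) - z := by
      simp [hK_def, ContinuousLinearMap.sub_apply, ContinuousLinearMap.mul_apply,
        ContinuousLinearMap.one_apply]
    rw [hy_def, hu_def, this]; abel
  have hynorm : ‖y‖ ≤ 8 + 1/4 := by
    rw [hyz]
    calc ‖z + K z‖ ≤ ‖z‖ + ‖K z‖ := norm_add_le _ _
      _ ≤ 8 + 1/4 := by linarith
  -- T' is bounded below
  have hTlow : ‖u‖ ≤ 2 * Cj * ‖y‖ := by
    have h1 : ‖u‖ ≤ Cj * ‖U u‖ := hUlow u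
    have h2 : ‖U u‖ ≤ ‖T' u‖ + ‖(T' - U) u‖ := by
      have h : U u = T' u - (T' - U) u := by
        simp [ContinuousLinearMap.sub_apply]
      rw [h]; exact norm_sub_le _ _
    have h3 : ‖(T' - U) u‖ ≤ ε * ‖u‖ :=
      le_trans ((T' - U).le_opNorm u)
        (mul_le_mul_of_nonneg_right hTU.le (norm_nonneg u))
    have h4 : Cj * ε = 1/32 := by
      rw [hε_def]; field_simp
    have h5 : ‖u‖ ≤ Cj * ‖y‖ + (Cj * ε) * ‖u‖ := by
      calc ‖u‖ ≤ Cj * ‖U u‖ := h1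
        _ ≤ Cj * (‖T' u‖ + ε * ‖u‖) := mul_le_mul_of_nonneg_left (by linarith) hCj0.le
        _ = Cj * ‖y‖ + (Cj * ε) * ‖u‖ := by rw [hy_def]; ring
    rw [h4] at h5
    have h6 : 0 ≤ Cj * ‖y‖ := mul_nonneg hCj0.le (norm_nonneg _)
    nlinarith [h5, h6, norm_nonneg u]
  have hyF : ‖y - U u‖ ≤ (1/16) * ‖y‖ := by
    have h3 : ‖(T' - U) u‖ ≤ ε * ‖u‖ :=
      le_trans ((T' - U).le_opNorm u)
        (mul_le_mul_of_nonneg_right hTU.le (norm_nonneg u))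
    have h4 : y - U u = (T' - U) u := by
      rw [hy_def]; simp [ContinuousLinearMap.sub_apply]
    have h5 : ε * (2 * Cj) = 1/16 := by
      rw [hε_def]; field_simp; ring
    calc ‖y - U u‖ = ‖(T' - U) u‖ := by rw [h4]
      _ ≤ ε * ‖u‖ := h3
      _ ≤ ε * (2 * Cj * ‖y‖) := mul_le_mul_of_nonneg_left hTlow hε.le
      _ = (ε * (2 * Cj)) * ‖y‖ := by ring
      _ = (1/16) * ‖y‖ := by rw [h5]
  -- contradiction
  have hfinal : (1 : ℝ) ≤ ‖z - U u‖ := hwsep m n hmn.ne' (U u) (hUmem u)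
  have hsplit : ‖z - U u‖ ≤ ‖K z‖ + ‖y - U u‖ := by
    have h : z - U u = -(K z) + (y - U u) := by rw [hyz]; abel
    rw [h]
    calc ‖-(K z) + (y - U u)‖ ≤ ‖-(K z)‖ + ‖y - U u‖ := norm_add_le _ _
      _ = ‖K z‖ + ‖y - U u‖ := by rw [norm_neg]
  have hy0 : (0:ℝ) ≤ ‖y‖ := norm_nonneg _
  linarith [hyF, hynorm]
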